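/- Let P be a pairing involution on Fin n × Fin m, let k ≥ 1, let s : ZMod k → Fin n be a cyclic sequence of states, and let x, y : Fin m be letters such that P (s t, x) = (s (t+1), y) for every t : ZMod k (i.e., the automaton A_C has a cycle of arrows s_t →^{x|y} s_{t+1} of length k). Then in the presented group Γ_P one has (b_y * (b_x)⁻¹)^k = 1. -/
import Mathlib


/-- The relator set of the group `Γ_P` associated to a pairing involution `P`. -/
def pairingRels {n m : ℕ} (P : Fin n × Fin m → Fin n × Fin m) :
    Set (FreeGroup (Fin n ⊕ Fin m)) :=
  {r | ∃ p : Fin n × Fin m,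
    r = FreeGroup.of (Sum.inl p.1) * FreeGroup.of (Sum.inr p.2) *
        (FreeGroup.of (Sum.inr (P p).2))⁻¹ * (FreeGroup.of (Sum.inl (P p).1))⁻¹}

/-- If the automaton `A_C` associated to a pairing involution `P` has a cycle of length
`k` of arrows `s_t →^{x|y} s_{t+1}`, then `(b_y b_x⁻¹)^k = 1` in `Γ_P`. -/
theorem cycle_gives_torsion_letters {n m : ℕ}
    (P : Fin n × Fin m → Fin n × Fin m)
    (hP_invol : ∀ p, P (P p) = p)
    (hP_nofix : ∀ p, P p ≠ p)
    (hP_row : ∀ p, (P p).1 ≠ p.1)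
    (hP_col : ∀ p, (P p).2 ≠ p.2)
    (k : ℕ) (hk : 1 ≤ k)
    (s : ZMod k → Fin n) (x y : Fin m)
    (hcycle : ∀ t : ZMod k, P (s t, x) = (s (t + 1), y)) :
    (PresentedGroup.of (rels := pairingRels P) (Sum.inr y) *
      (PresentedGroup.of (rels := pairingRels P) (Sum.inr x))⁻¹) ^ k = 1 := by
  set A : ZMod k → PresentedGroup (pairingRels P) :=
    (fun t => PresentedGroup.of (Sum.inl (s t))) with hA
  set c : PresentedGroup (pairingRels P) :=
    PresentedGroup.of (rels := pairingRels P) (Sum.inr y) *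
      (PresentedGroup.of (rels := pairingRels P) (Sum.inr x))⁻¹ with hc
  have key : ∀ t : ZMod k, c = (A (t + 1))⁻¹ * A t := by
    intro t
    have hrel : (FreeGroup.of (Sum.inl (s t)) * FreeGroup.of (Sum.inr x) *
        (FreeGroup.of (Sum.inr y))⁻¹ * (FreeGroup.of (Sum.inl (s (t + 1))))⁻¹ :
        FreeGroup (Fin n ⊕ Fin m)) ∈ pairingRels P :=
      ⟨(s t, x), by rw [hcycle t]⟩
    have h1 : ((QuotientGroup.mk (FreeGroup.of (Sum.inl (s t)) * FreeGroup.of (Sum.inr x) *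
        (FreeGroup.of (Sum.inr y))⁻¹ * (FreeGroup.of (Sum.inl (s (t + 1))))⁻¹)) :
        PresentedGroup (pairingRels P)) = 1 := by
      rw [QuotientGroup.eq_one_iff]
      exact Subgroup.subset_normalClosure hrel
    have h2 : PresentedGroup.of (rels := pairingRels P) (Sum.inl (s t)) *
        PresentedGroup.of (rels := pairingRels P) (Sum.inr x) *
        (PresentedGroup.of (rels := pairingRels P) (Sum.inr y))⁻¹ *
        (PresentedGroup.of (rels := pairingRels P) (Sum.inl (s (t + 1))))⁻¹ = 1 := h1
    have h3 : A t * PresentedGroup.of (rels := pairingRels P) (Sum.inr x)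
        = A (t + 1) * PresentedGroup.of (rels := pairingRels P) (Sum.inr y) := by
      simp only [hA]
      rw [mul_inv_eq_one, mul_inv_eq_iff_eq_mul] at h2
      exact h2
    rw [hc]
    rw [mul_inv_eq_iff_eq_mul, mul_assoc, h3]
    group
  have main : ∀ j : ℕ, c ^ j = (A 1)⁻¹ * A (1 - (j : ZMod k)) := by
    intro j
    induction j with
    | zero => simp
    | succ j ih =>
      rw [pow_succ, ih, key (-(j : ZMod k))]
      have e1 : -(j : ZMod k) + 1 = 1 - (j : ZMod k) := by ring
      have e2 : -(j : ZMod k) = 1 - ((j + 1 : ℕ) : ZMod k) := by push_cast; ring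
      rw [e1, e2]
      group
  have hfin := main k
  rw [ZMod.natCast_self, sub_zero] at hfin
  rw [hfin]
  group
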